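/- arXiv:2602.00511 — 4 statements merged into one kernel-verified Lean document; each statement's English description precedes it below -/
import Mathlib

section
/- Let K ⊆ ℝ^d, k ≥ 2, and let p = (p_1, ..., p_k) : K → ℝ^k be continuous with p_i(x) > 0 for all i and ∑_{i=1}^k p_i(x) = 1 for all x ∈ K. Define γ_i(x) = p_i(x) / ∑_{j=i}^k p_j(x) and φ_i(x) = log(γ_i(x)/(1-γ_i(x))) for 1 ≤ i ≤ k-1. Then each φ_i is continuous on K, and the PUNN partition functions h_1, ..., h_k built from the sigmoid gates g_i(x) = 1/(1 + exp(-φ_i(x))) satisfy h_i(x) = p_i(x) for every x ∈ K and every i ∈ {1, ..., k}. -/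
/-- PUNN partition functions: given `k` and gates `g 1, …, g (k-1) : X → ℝ`, define
`h 1 = g 1`, `h i = (∏_{j=1}^{i-1} (1 - g j)) * g i` for `2 ≤ i ≤ k-1`, and
`h k = ∏_{j=1}^{k-1} (1 - g j)`. -/
noncomputable def punnH {X : Type*} (k : ℕ) (g : ℕ → X → ℝ) (i : ℕ) (x : X) : ℝ :=
  if i = k then ∏ j ∈ Finset.Ico 1 k, (1 - g j x)
  else (∏ j ∈ Finset.Ico 1 i, (1 - g j x)) * g i x

/-- Let `p : K → ℝ^k` be a continuous probability map with strictly positive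
coordinates summing to `1`.  With `γ i x = p i x / ∑_{j=i}^k p j x` and
`φ i x = log (γ i x / (1 - γ i x))`, each `φ i` is continuous on `K`, and the
PUNN partition functions built from the sigmoid gates
`g i x = 1 / (1 + exp (−φ i x))` satisfy `h i x = p i x` on `K`. -/
theorem punn_sigmoid_exact_realizability (d k : ℕ) (hk : 2 ≤ k)
    (K : Set (EuclideanSpace ℝ (Fin d)))
    (p : ℕ → EuclideanSpace ℝ (Fin d) → ℝ)
    (hp_cont : ∀ i ∈ Finset.Icc 1 k, ContinuousOn (p i) K)
    (hp_pos : ∀ i ∈ Finset.Icc 1 k, ∀ x ∈ K, 0 < p i x)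
    (hp_sum : ∀ x ∈ K, ∑ i ∈ Finset.Icc 1 k, p i x = 1)
    (γ φ : ℕ → EuclideanSpace ℝ (Fin d) → ℝ)
    (hγ : ∀ i ∈ Finset.Icc 1 (k - 1), ∀ x ∈ K,
      γ i x = p i x / ∑ j ∈ Finset.Icc i k, p j x)
    (hφ : ∀ i ∈ Finset.Icc 1 (k - 1), ∀ x ∈ K,
      φ i x = Real.log (γ i x / (1 - γ i x))) :
    (∀ i ∈ Finset.Icc 1 (k - 1), ContinuousOn (φ i) K) ∧
    (∀ x ∈ K, ∀ i ∈ Finset.Icc 1 k,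
      punnH k (fun j y => 1 / (1 + Real.exp (-(φ j y)))) i x = p i x) := by
  set g : ℕ → EuclideanSpace ℝ (Fin d) → ℝ :=
    fun j y => 1 / (1 + Real.exp (-(φ j y))) with hg_def
  set S : ℕ → EuclideanSpace ℝ (Fin d) → ℝ :=
    fun i x => ∑ j ∈ Finset.Icc i k, p j x with hS_def
  have hS_pos : ∀ i, 1 ≤ i → i ≤ k → ∀ x ∈ K, 0 < S i x := by
    intro i h1 h2 x hx
    apply Finset.sum_pos
    · intro j hj
      obtain ⟨hj1, hj2⟩ := Finset.mem_Icc.mp hj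
      exact hp_pos j (Finset.mem_Icc.mpr ⟨le_trans h1 hj1, hj2⟩) x hx
    · exact Finset.nonempty_Icc.mpr h2
  have hS_split : ∀ i, i ≤ k → ∀ x, S i x = p i x + S (i + 1) x := by
    intro i hik x
    simp only [hS_def]
    rw [Finset.Icc_eq_cons_Ioc hik, Finset.sum_cons, Finset.Icc_add_one_left_eq_Ioc]
  have hkey : ∀ i, 1 ≤ i → i ≤ k - 1 → ∀ x ∈ K,
      γ i x / (1 - γ i x) = p i x / S (i + 1) x ∧
      g i x = p i x / S i x ∧ 1 - g i x = S (i + 1) x / S i x := by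
    intro i h1 h2 x hx
    have hik : i ≤ k := by omega
    have hSi := hS_pos i h1 hik x hx
    have hSi1 := hS_pos (i + 1) (by omega) (by omega) x hx
    have hpi := hp_pos i (Finset.mem_Icc.mpr ⟨h1, hik⟩) x hx
    have hSi' := hSi.ne'
    have hSi1' := hSi1.ne'
    have hpi' := hpi.ne'
    have hmem : i ∈ Finset.Icc 1 (k - 1) := Finset.mem_Icc.mpr ⟨h1, h2⟩
    have hγi := hγ i hmem x hx
    have hsplit := hS_split i hik x
    have hγi' : γ i x = p i x / S i x := by rw [hγi, hS_def]
    have hratio : γ i x / (1 - γ i x) = p i x / S (i + 1) x := by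
      rw [hγi', hsplit]
      have h0 : p i x + S (i + 1) x ≠ 0 := by positivity
      field_simp
      rw [add_sub_cancel_left, div_self hSi1']
    have hexp : Real.exp (φ i x) = p i x / S (i + 1) x := by
      rw [hφ i hmem x hx, hratio, Real.exp_log (by positivity)]
    have hgval : g i x = p i x / S i x := by
      simp only [hg_def]
      rw [Real.exp_neg, hexp, hsplit]
      have h0 : p i x + S (i + 1) x ≠ 0 := by positivity
      field_simp
    refine ⟨hratio, hgval, ?_⟩
    rw [hgval, hsplit]
    have h0 : p i x + S (i + 1) x ≠ 0 := by positivity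
    field_simp
    ring
  have hprod : ∀ x ∈ K, ∀ i, 1 ≤ i → i ≤ k →
      ∏ j ∈ Finset.Ico 1 i, (1 - g j x) = S i x := by
    intro x hx i
    induction i with
    | zero => omega
    | succ n ih =>
      intro h1 h2
      rcases Nat.lt_or_ge n 1 with h | h
      · have hn : n = 0 := by omega
        subst hn
        simp only [Finset.Ico_self, Finset.prod_empty, hS_def]
        exact (hp_sum x hx).symm
      · rw [Finset.prod_Ico_succ_top h, ih h (by omega),
          (hkey n h (by omega) x hx).2.2, hS_split n (by omega) x]
        have hSn1 := (hS_pos (n + 1) (by omega) h2 x hx).ne'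
        have hpn := (hp_pos n (Finset.mem_Icc.mpr ⟨h, by omega⟩) x hx).ne'
        have h0 : p n x + S (n + 1) x ≠ 0 := by
          have := hS_pos (n + 1) (by omega) h2 x hx
          have := hp_pos n (Finset.mem_Icc.mpr ⟨h, by omega⟩) x hx
          positivity
        field_simp
  constructor
  · intro i hi
    obtain ⟨h1, h2⟩ := Finset.mem_Icc.mp hi
    have hik : i ≤ k := by omega
    have hc : ContinuousOn (fun x => Real.log (p i x / S (i + 1) x)) K := by
      apply ContinuousOn.log
      · apply ContinuousOn.div (hp_cont i (Finset.mem_Icc.mpr ⟨h1, hik⟩))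
        · exact continuousOn_finset_sum _ fun j hj => by
            obtain ⟨hj1, hj2⟩ := Finset.mem_Icc.mp hj
            exact hp_cont j (Finset.mem_Icc.mpr ⟨by omega, hj2⟩)
        · intro x hx
          exact (hS_pos (i + 1) (by omega) (by omega) x hx).ne'
      · intro x hx
        have := hp_pos i (Finset.mem_Icc.mpr ⟨h1, hik⟩) x hx
        have := hS_pos (i + 1) (by omega) (by omega) x hx
        positivity
    apply hc.congr
    intro x hx
    rw [hφ i hi x hx, (hkey i h1 h2 x hx).1]
  · intro x hx i hi
    obtain ⟨h1, h2⟩ := Finset.mem_Icc.mp hi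
    by_cases hik : i = k
    · subst hik
      simp only [punnH, if_pos rfl]
      rw [hprod x hx i h1 le_rfl]
      simp [hS_def]
    · have h2' : i ≤ k - 1 := by omega
      simp only [punnH, if_neg hik]
      rw [hprod x hx i h1 (by omega), (hkey i h1 h2' x hx).2.1]
      have hSi := (hS_pos i h1 (by omega) x hx).ne'
      field_simp
end

section
/- Let k ≥ 2, let X be a set, and let g_1, ..., g_{k-1} and g̃_1, ..., g̃_{k-1} be functions from X to ℝ all taking values in [0,1]. Let h_1, ..., h_k and h̃_1, ..., h̃_k denote the PUNN partition functions built from the gates g_j and g̃_j respectively. Then for every x ∈ X and every i ∈ {1, ..., k}, |h̃_i(x) − h_i(x)| ≤ ∑_{j=1}^{min(i, k-1)} |g̃_j(x) − g_j(x)|. -/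
lemma prod_diff_le_sum (s : Finset ℕ) (f f' : ℕ → ℝ)
    (hf : ∀ j ∈ s, |f j| ≤ 1) (hf' : ∀ j ∈ s, |f' j| ≤ 1) :
    |∏ j ∈ s, f' j - ∏ j ∈ s, f j| ≤ ∑ j ∈ s, |f' j - f j| := by
  induction s using Finset.cons_induction with
  | empty => simp
  | cons a s ha ih =>
    rw [Finset.prod_cons, Finset.prod_cons, Finset.sum_cons]
    have hP : |∏ j ∈ s, f j| ≤ 1 := by
      rw [Finset.abs_prod]
      exact Finset.prod_le_one (fun j hj => abs_nonneg _)
        (fun j hj => hf j (Finset.mem_cons_of_mem hj))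
    have hfa' : |f' a| ≤ 1 := hf' a (Finset.mem_cons_self a s)
    have key : f' a * ∏ j ∈ s, f' j - f a * ∏ j ∈ s, f j
        = f' a * (∏ j ∈ s, f' j - ∏ j ∈ s, f j) + (f' a - f a) * ∏ j ∈ s, f j := by
      ring
    rw [key]
    calc |f' a * (∏ j ∈ s, f' j - ∏ j ∈ s, f j) + (f' a - f a) * ∏ j ∈ s, f j|
        ≤ |f' a| * |∏ j ∈ s, f' j - ∏ j ∈ s, f j| + |f' a - f a| * |∏ j ∈ s, f j| := by
          refine (abs_add_le _ _).trans ?_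
          rw [abs_mul, abs_mul]
      _ ≤ |f' a - f a| + ∑ j ∈ s, |f' j - f j| := by
          have h1 := mul_le_mul hfa'
            (ih (fun j hj => hf j (Finset.mem_cons_of_mem hj))
              (fun j hj => hf' j (Finset.mem_cons_of_mem hj)))
            (abs_nonneg _) zero_le_one
          have h2 := mul_le_mul_of_nonneg_left hP (abs_nonneg (f' a - f a))
          nlinarith [abs_nonneg (f' a - f a)]

/-- Stability of the PUNN partition functions under gate perturbations: if the
gates `g j` and `g̃ j` all take values in `[0,1]`, then for every `x` and every
`i ∈ {1, …, k}`,
`|h̃ i x − h i x| ≤ ∑_{j=1}^{min(i, k-1)} |g̃ j x − g j x|`. -/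
theorem punn_partition_stability {X : Type*} (k : ℕ) (hk : 2 ≤ k)
    (g g' : ℕ → X → ℝ)
    (hg : ∀ j ∈ Finset.Icc 1 (k - 1), ∀ x, g j x ∈ Set.Icc (0 : ℝ) 1)
    (hg' : ∀ j ∈ Finset.Icc 1 (k - 1), ∀ x, g' j x ∈ Set.Icc (0 : ℝ) 1) :
    ∀ x, ∀ i ∈ Finset.Icc 1 k,
      |punnH k g' i x - punnH k g i x|
        ≤ ∑ j ∈ Finset.Icc 1 (min i (k - 1)), |g' j x - g j x| := by
  intro x i hi
  rw [Finset.mem_Icc] at hi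
  obtain ⟨hi1, hik⟩ := hi
  have hIcc : Finset.Icc 1 (k - 1) = Finset.Ico 1 k := by
    ext j; simp only [Finset.mem_Icc, Finset.mem_Ico]; omega
  have habs : ∀ j ∈ Finset.Ico 1 k, |1 - g j x| ≤ 1 := by
    intro j hj
    have := hg j (hIcc ▸ hj) x
    rw [Set.mem_Icc] at this
    rw [abs_le]; constructor <;> linarith [this.1, this.2]
  have habs' : ∀ j ∈ Finset.Ico 1 k, |1 - g' j x| ≤ 1 := by
    intro j hj
    have := hg' j (hIcc ▸ hj) x
    rw [Set.mem_Icc] at this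
    rw [abs_le]; constructor <;> linarith [this.1, this.2]
  by_cases h : i = k
  · simp only [punnH, if_pos h]
    have hmin : min i (k - 1) = k - 1 := by omega
    rw [hmin, hIcc]
    have := prod_diff_le_sum (Finset.Ico 1 k) (fun j => 1 - g j x) (fun j => 1 - g' j x)
      habs habs'
    refine this.trans_eq (Finset.sum_congr rfl fun j hj => ?_)
    rw [show (1 - g' j x) - (1 - g j x) = -(g' j x - g j x) by ring, abs_neg]
  · have hik1 : i ≤ k - 1 := by omega
    have hmin : min i (k - 1) = i := by omega
    simp only [punnH, if_neg h, hmin]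
    have hsub : Finset.Ico 1 i ⊆ Finset.Ico 1 k := Finset.Ico_subset_Ico le_rfl hik
    have hgi := hg i (Finset.mem_Icc.mpr ⟨hi1, hik1⟩) x
    have hgi' := hg' i (Finset.mem_Icc.mpr ⟨hi1, hik1⟩) x
    rw [Set.mem_Icc] at hgi hgi'
    have hP : |∏ j ∈ Finset.Ico 1 i, (1 - g j x)| ≤ 1 := by
      rw [Finset.abs_prod]
      exact Finset.prod_le_one (fun j hj => abs_nonneg _) (fun j hj => habs j (hsub hj))
    have hP' : |∏ j ∈ Finset.Ico 1 i, (1 - g' j x)| ≤ 1 := by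
      rw [Finset.abs_prod]
      exact Finset.prod_le_one (fun j hj => abs_nonneg _) (fun j hj => habs' j (hsub hj))
    have hprod := prod_diff_le_sum (Finset.Ico 1 i) (fun j => 1 - g j x) (fun j => 1 - g' j x)
      (fun j hj => habs j (hsub hj)) (fun j hj => habs' j (hsub hj))
    have hgiabs : |g i x| ≤ 1 := by rw [abs_le]; exact ⟨by linarith [hgi.1], hgi.2⟩
    have key : (∏ j ∈ Finset.Ico 1 i, (1 - g' j x)) * g' i x
        - (∏ j ∈ Finset.Ico 1 i, (1 - g j x)) * g i x
        = (∏ j ∈ Finset.Ico 1 i, (1 - g' j x)) * (g' i x - g i x)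
          + ((∏ j ∈ Finset.Ico 1 i, (1 - g' j x)) - ∏ j ∈ Finset.Ico 1 i, (1 - g j x)) * g i x := by
      ring
    rw [key]
    have hIcci : Finset.Icc 1 i = insert i (Finset.Ico 1 i) := by
      rw [Finset.Ico_insert_right hi1]
    rw [hIcci, Finset.sum_insert (by simp)]
    calc |(∏ j ∈ Finset.Ico 1 i, (1 - g' j x)) * (g' i x - g i x)
          + ((∏ j ∈ Finset.Ico 1 i, (1 - g' j x)) - ∏ j ∈ Finset.Ico 1 i, (1 - g j x)) * g i x|
        ≤ |∏ j ∈ Finset.Ico 1 i, (1 - g' j x)| * |g' i x - g i x|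
          + |(∏ j ∈ Finset.Ico 1 i, (1 - g' j x)) - ∏ j ∈ Finset.Ico 1 i, (1 - g j x)| * |g i x| := by
          refine (abs_add_le _ _).trans ?_
          rw [abs_mul, abs_mul]
      _ ≤ |g' i x - g i x|
          + ∑ j ∈ Finset.Ico 1 i, |(1 - g' j x) - (1 - g j x)| := by
          have h1 := mul_le_mul_of_nonneg_right hP' (abs_nonneg (g' i x - g i x))
          have h2 := mul_le_mul hprod hgiabs (abs_nonneg _)
            (Finset.sum_nonneg fun j hj => abs_nonneg _)
          simpa using add_le_add (by simpa using h1) (by simpa using h2)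
      _ = |g' i x - g i x| + ∑ j ∈ Finset.Ico 1 i, |g' j x - g j x| := by
          congr 1
          exact Finset.sum_congr rfl fun j hj => by
            rw [show (1 - g' j x) - (1 - g j x) = -(g' j x - g j x) by ring, abs_neg]
end

section
/- Let K ⊆ ℝ^d be a nonempty compact set, let k ≥ 2, and let p = (p_1, ..., p_k) : K → ℝ^k be continuous with p_i(x) > 0 for all i and ∑_{i=1}^k p_i(x) = 1 for all x ∈ K. Let D be a set of continuous functions from K to ℝ that is dense in the sup norm (for every continuous φ : K → ℝ and every δ > 0 there exists θ ∈ D with sup_{x∈K} |θ(x) − φ(x)| < δ). Then for every ε > 0 there exist θ_1, ..., θ_{k-1} ∈ D such that the PUNN partition functions h_1, ..., h_k built from the sigmoid gates g_i(x) = 1/(1 + exp(-θ_i(x))) satisfy max_{1≤i≤k} sup_{x∈K} |h_i(x) − p_i(x)| < ε. -/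
section Aux

open Finset

private lemma aux_sigmoid_mono {a b : ℝ} (hab : a ≤ b) :
    1 / (1 + Real.exp (-a)) ≤ 1 / (1 + Real.exp (-b)) ∧
    1 / (1 + Real.exp (-b)) - 1 / (1 + Real.exp (-a)) ≤ b - a := by
  have hu : (0:ℝ) < Real.exp (-a) := Real.exp_pos _
  have hv : (0:ℝ) < Real.exp (-b) := Real.exp_pos _
  have hvu : Real.exp (-b) ≤ Real.exp (-a) := Real.exp_le_exp.2 (by linarith)
  have hkey : Real.exp (-a) * (1 + (a - b)) ≤ Real.exp (-b) := by
    have h1 : (a - b) + 1 ≤ Real.exp (a - b) := Real.add_one_le_exp _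
    have h2 : Real.exp (-a) * Real.exp (a - b) = Real.exp (-b) := by
      rw [← Real.exp_add]; ring_nf
    nlinarith [hu]
  have hda : (0:ℝ) < 1 + Real.exp (-a) := by linarith
  have hdb : (0:ℝ) < 1 + Real.exp (-b) := by linarith
  constructor
  · apply div_le_div_of_nonneg_left (by norm_num) hdb (by linarith)
  · rw [div_sub_div _ _ (ne_of_gt hdb) (ne_of_gt hda), div_le_iff₀ (by positivity)]
    nlinarith [hu, hv, hab]

private lemma aux_sigmoid_lip (a b : ℝ) :
    |1 / (1 + Real.exp (-a)) - 1 / (1 + Real.exp (-b))| ≤ |a - b| := by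
  rcases le_total a b with h | h
  · obtain ⟨h1, h2⟩ := aux_sigmoid_mono h
    rw [abs_of_nonpos (by linarith), abs_of_nonpos (by linarith)]; linarith
  · obtain ⟨h1, h2⟩ := aux_sigmoid_mono h
    rw [abs_of_nonneg (by linarith), abs_of_nonneg (by linarith)]; linarith

private lemma aux_sigmoid_mem (t : ℝ) :
    0 ≤ 1 / (1 + Real.exp (-t)) ∧ 1 / (1 + Real.exp (-t)) ≤ 1 := by
  have h : (0:ℝ) < Real.exp (-t) := Real.exp_pos _
  constructor
  · positivity
  · rw [div_le_one (by linarith)]; linarith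

private lemma aux_abs_prod_sub_prod (s : Finset ℕ) (a b : ℕ → ℝ)
    (ha : ∀ j ∈ s, 0 ≤ a j ∧ a j ≤ 1) (hb : ∀ j ∈ s, 0 ≤ b j ∧ b j ≤ 1) :
    |∏ j ∈ s, a j - ∏ j ∈ s, b j| ≤ ∑ j ∈ s, |a j - b j| := by
  classical
  induction s using Finset.induction_on with
  | empty => simp
  | @insert i s his ih =>
    have ha' : ∀ j ∈ s, 0 ≤ a j ∧ a j ≤ 1 := fun j hj => ha j (mem_insert_of_mem hj)
    have hb' : ∀ j ∈ s, 0 ≤ b j ∧ b j ≤ 1 := fun j hj => hb j (mem_insert_of_mem hj)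
    have hai := ha i (mem_insert_self i s)
    have hbi := hb i (mem_insert_self i s)
    rw [Finset.prod_insert his, Finset.prod_insert his, Finset.sum_insert his]
    have hPb0 : 0 ≤ ∏ j ∈ s, b j := Finset.prod_nonneg fun j hj => (hb' j hj).1
    have hPb1 : ∏ j ∈ s, b j ≤ 1 := Finset.prod_le_one (fun j hj => (hb' j hj).1)
      (fun j hj => (hb' j hj).2)
    calc |a i * ∏ j ∈ s, a j - b i * ∏ j ∈ s, b j|
        = |a i * (∏ j ∈ s, a j - ∏ j ∈ s, b j) + (a i - b i) * ∏ j ∈ s, b j| := by ring_nf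
      _ ≤ |a i * (∏ j ∈ s, a j - ∏ j ∈ s, b j)| + |(a i - b i) * ∏ j ∈ s, b j| := abs_add_le _ _
      _ = |a i| * |∏ j ∈ s, a j - ∏ j ∈ s, b j| + |a i - b i| * |∏ j ∈ s, b j| := by
          rw [abs_mul, abs_mul]
      _ ≤ 1 * (∑ j ∈ s, |a j - b j|) + |a i - b i| * 1 := by
          apply add_le_add
          · exact mul_le_mul (abs_le.2 ⟨by linarith [hai.1], hai.2⟩) (ih ha' hb')
              (abs_nonneg _) zero_le_one
          · exact mul_le_mul_of_nonneg_left (abs_le.2 ⟨by linarith [hPb0], hPb1⟩) (abs_nonneg _)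
      _ = |a i - b i| + ∑ j ∈ s, |a j - b j| := by ring

private lemma aux_le_biSup {α : Type*} {K : Set α} {f : α → ℝ} (C : ℝ)
    (hC : ∀ y ∈ K, |f y| ≤ C) {x : α} (hx : x ∈ K) :
    |f x| ≤ ⨆ y ∈ K, |f y| := by
  have hb : BddAbove (Set.range fun y => ⨆ _ : y ∈ K, |f y|) := by
    refine ⟨max C 0, ?_⟩
    rintro _ ⟨y, rfl⟩
    dsimp only
    by_cases hy : y ∈ K
    · have h1 : (⨆ _ : y ∈ K, |f y|) = |f y| := ciSup_pos hy
      rw [h1]; exact le_max_of_le_left (hC y hy)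
    · haveI : IsEmpty (y ∈ K) := ⟨hy⟩
      rw [Real.iSup_of_isEmpty]
      exact le_max_right _ _
  have h1 : (⨆ _ : x ∈ K, |f x|) = |f x| := ciSup_pos hx
  calc |f x| = ⨆ _ : x ∈ K, |f x| := h1.symm
    _ ≤ ⨆ y ∈ K, |f y| := le_ciSup hb x

private lemma aux_biSup_lt {α : Type*} {K : Set α} {f : α → ℝ} {c ε : ℝ}
    (hc : 0 ≤ c) (hcε : c < ε) (h : ∀ y ∈ K, |f y| ≤ c) :
    (⨆ y ∈ K, |f y|) < ε :=
  lt_of_le_of_lt (Real.iSup_le (fun y => Real.iSup_le (fun hy => h y hy) hc) hc) hcε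

end Aux

/-- Density of PUNN with sigmoid gates: for a nonempty compact `K ⊆ ℝ^d`, a
continuous probability map `p : K → ri(Δ^{k-1})`, and a sup-norm-dense class `D`
of continuous functions on `K`, for every `ε > 0` there exist `θ 1, …, θ (k-1)`
in `D` such that the PUNN partition functions built from the sigmoid gates
`g i x = 1 / (1 + exp (−θ i x))` are uniformly `ε`-close to `p` on `K`. -/
theorem punn_density_sigmoid (d k : ℕ) (hk : 2 ≤ k)
    (K : Set (EuclideanSpace ℝ (Fin d))) (hK : IsCompact K) (hne : K.Nonempty)
    (p : ℕ → EuclideanSpace ℝ (Fin d) → ℝ)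
    (hp_cont : ∀ i ∈ Finset.Icc 1 k, ContinuousOn (p i) K)
    (hp_pos : ∀ i ∈ Finset.Icc 1 k, ∀ x ∈ K, 0 < p i x)
    (hp_sum : ∀ x ∈ K, ∑ i ∈ Finset.Icc 1 k, p i x = 1)
    (D : Set (EuclideanSpace ℝ (Fin d) → ℝ))
    (hD_cont : ∀ f ∈ D, ContinuousOn f K)
    (hD_dense : ∀ φ : EuclideanSpace ℝ (Fin d) → ℝ, ContinuousOn φ K →
      ∀ δ > 0, ∃ θ ∈ D, (⨆ x ∈ K, |θ x - φ x|) < δ) :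
    ∀ ε > 0, ∃ θ : ℕ → EuclideanSpace ℝ (Fin d) → ℝ,
      (∀ i ∈ Finset.Icc 1 (k - 1), θ i ∈ D) ∧
      ∀ i ∈ Finset.Icc 1 k,
        (⨆ x ∈ K,
          |punnH k (fun j y => 1 / (1 + Real.exp (-(θ j y)))) i x - p i x|) < ε := by
  classical
  intro ε hε
  -- tail sums
  set R : ℕ → EuclideanSpace ℝ (Fin d) → ℝ := fun i x => ∑ j ∈ Finset.Icc i k, p j x with hR
  have hRpos : ∀ i, 1 ≤ i → i ≤ k → ∀ x ∈ K, 0 < R i x := by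
    intro i hi1 hik x hx
    apply Finset.sum_pos
    · intro j hj
      rw [Finset.mem_Icc] at hj
      exact hp_pos j (Finset.mem_Icc.2 ⟨le_trans hi1 hj.1, hj.2⟩) x hx
    · exact Finset.nonempty_Icc.2 hik
  have hRcont : ∀ i, 1 ≤ i → ContinuousOn (R i) K := by
    intro i hi1
    apply continuousOn_finset_sum
    intro j hj
    rw [Finset.mem_Icc] at hj
    exact hp_cont j (Finset.mem_Icc.2 ⟨le_trans hi1 hj.1, hj.2⟩)
  have hRrec : ∀ i, i ≤ k → ∀ x, R i x = p i x + R (i + 1) x := by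
    intro i hik x
    simp only [hR]
    rw [← Finset.Ico_add_one_right_eq_Icc, Finset.sum_eq_sum_Ico_succ_bot (b := k + 1) (Nat.lt_succ_of_le hik),
      Finset.Ico_add_one_right_eq_Icc]
  have hR1 : ∀ x ∈ K, R 1 x = 1 := hp_sum
  -- ideal gates
  set G : ℕ → EuclideanSpace ℝ (Fin d) → ℝ := fun j x => p j x / R j x with hGdef
  have hGmem : ∀ j, 1 ≤ j → j + 1 ≤ k → ∀ x ∈ K, 0 ≤ G j x ∧ G j x ≤ 1 := by
    intro j hj1 hjk x hx
    have hpj : 0 < p j x := hp_pos j (Finset.mem_Icc.2 ⟨hj1, by omega⟩) x hx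
    have hRj : 0 < R j x := hRpos j hj1 (by omega) x hx
    have hRj1 : 0 < R (j + 1) x := hRpos (j + 1) (by omega) hjk x hx
    have hrec := hRrec j (by omega) x
    constructor
    · exact div_nonneg hpj.le hRj.le
    · rw [div_le_one hRj]; linarith
  -- telescoping product
  have htel : ∀ x ∈ K, ∀ i, 1 ≤ i → i ≤ k →
      (∏ j ∈ Finset.Ico 1 i, (1 - G j x)) = R i x := by
    intro x hx
    intro i hi1
    induction i, hi1 using Nat.le_induction with
    | base => intro _; simp [hR1 x hx]
    | succ n hn ih =>
      intro hnk
      rw [Finset.prod_Ico_succ_top hn, ih (by omega)]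
      have hRn : 0 < R n x := hRpos n hn (by omega) x hx
      have hrec := hRrec n (by omega) x
      simp only [hGdef]
      field_simp
      linarith
  -- exact representation
  have hpunnG : ∀ i, 1 ≤ i → i ≤ k → ∀ x ∈ K, punnH k G i x = p i x := by
    intro i hi1 hik x hx
    by_cases hik' : i = k
    · simp only [punnH, if_pos hik']
      rw [htel x hx k (by omega) le_rfl, hik']
      simp only [hR]
      rw [Finset.Icc_self, Finset.sum_singleton]
    · simp only [punnH, if_neg hik']
      rw [htel x hx i hi1 hik]
      have hRi : 0 < R i x := hRpos i hi1 hik x hx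
      simp only [hGdef]
      field_simp
  -- ideal pre-gates
  set Θ : ℕ → EuclideanSpace ℝ (Fin d) → ℝ :=
    fun j x => Real.log (p j x) - Real.log (R (j + 1) x) with hΘdef
  have hΘcont : ∀ j, 1 ≤ j → j + 1 ≤ k → ContinuousOn (Θ j) K := by
    intro j hj1 hjk
    apply ContinuousOn.sub
    · exact ContinuousOn.log (hp_cont j (Finset.mem_Icc.2 ⟨hj1, by omega⟩))
        (fun x hx => ne_of_gt (hp_pos j (Finset.mem_Icc.2 ⟨hj1, by omega⟩) x hx))
    · exact ContinuousOn.log (hRcont (j + 1) (by omega))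
        (fun x hx => ne_of_gt (hRpos (j + 1) (by omega) hjk x hx))
  have hσΘ : ∀ j, 1 ≤ j → j + 1 ≤ k → ∀ x ∈ K,
      1 / (1 + Real.exp (-(Θ j x))) = G j x := by
    intro j hj1 hjk x hx
    have hpj : 0 < p j x := hp_pos j (Finset.mem_Icc.2 ⟨hj1, by omega⟩) x hx
    have hRj1 : 0 < R (j + 1) x := hRpos (j + 1) (by omega) hjk x hx
    have hRj : 0 < R j x := hRpos j hj1 (by omega) x hx
    have hrec := hRrec j (by omega) x
    have : Real.exp (-(Θ j x)) = R (j + 1) x / p j x := by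
      simp only [hΘdef, neg_sub]
      rw [Real.exp_sub, Real.exp_log hRj1, Real.exp_log hpj]
    rw [this]
    simp only [hGdef]
    rw [hrec]
    field_simp
  -- choose approximating parameters
  set δ : ℝ := ε / (2 * k) with hδdef
  have hkR : (0:ℝ) < (k:ℝ) := by exact_mod_cast (by omega : 0 < k)
  have hδpos : 0 < δ := div_pos hε (by linarith)
  have hex : ∀ j, ∃ θj : EuclideanSpace ℝ (Fin d) → ℝ,
      (1 ≤ j ∧ j + 1 ≤ k) → θj ∈ D ∧ (⨆ x ∈ K, |θj x - Θ j x|) < δ := by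
    intro j
    by_cases hj : 1 ≤ j ∧ j + 1 ≤ k
    · obtain ⟨θj, hθD, hθδ⟩ := hD_dense (Θ j) (hΘcont j hj.1 hj.2) δ hδpos
      exact ⟨θj, fun _ => ⟨hθD, hθδ⟩⟩
    · exact ⟨0, fun h => absurd h hj⟩
  choose θ hθ using hex
  refine ⟨θ, ?_, ?_⟩
  · intro i hi
    rw [Finset.mem_Icc] at hi
    exact (hθ i ⟨hi.1, by omega⟩).1
  -- main estimate
  intro i hi
  rw [Finset.mem_Icc] at hi
  set g : ℕ → EuclideanSpace ℝ (Fin d) → ℝ :=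
    fun j y => 1 / (1 + Real.exp (-(θ j y))) with hgdef
  -- pointwise gate error
  have hgate : ∀ j, 1 ≤ j → j + 1 ≤ k → ∀ x ∈ K, |g j x - G j x| ≤ δ := by
    intro j hj1 hjk x hx
    obtain ⟨hθD, hθδ⟩ := hθ j ⟨hj1, hjk⟩
    have hcontdiff : ContinuousOn (fun y => θ j y - Θ j y) K :=
      (hD_cont _ hθD).sub (hΘcont j hj1 hjk)
    obtain ⟨C, hC⟩ := hK.exists_bound_of_continuousOn hcontdiff
    have hle : |θ j x - Θ j x| ≤ ⨆ y ∈ K, |θ j y - Θ j y| :=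
      aux_le_biSup C (fun y hy => hC y hy) hx
    have h1 : |θ j x - Θ j x| ≤ δ := le_of_lt (lt_of_le_of_lt hle hθδ)
    have h2 : |g j x - G j x| ≤ |θ j x - Θ j x| := by
      rw [← hσΘ j hj1 hjk x hx]
      exact aux_sigmoid_lip _ _
    linarith
  have hgmem : ∀ j x, 0 ≤ g j x ∧ g j x ≤ 1 := fun j x => aux_sigmoid_mem _
  -- pointwise bound for punnH difference
  have hpoint : ∀ x ∈ K, |punnH k g i x - p i x| ≤ ε / 2 := by
    intro x hx
    rw [← hpunnG i hi.1 hi.2 x hx]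
    by_cases hik : i = k
    · simp only [punnH, if_pos hik]
      calc |(∏ j ∈ Finset.Ico 1 k, (1 - g j x)) - ∏ j ∈ Finset.Ico 1 k, (1 - G j x)|
          ≤ ∑ j ∈ Finset.Ico 1 k, |(1 - g j x) - (1 - G j x)| := by
            apply aux_abs_prod_sub_prod
            · intro j hj
              obtain ⟨h1, h2⟩ := hgmem j x
              constructor <;> linarith
            · intro j hj
              rw [Finset.mem_Ico] at hj
              obtain ⟨h1, h2⟩ := hGmem j hj.1 hj.2 x hx
              constructor <;> linarith
        _ ≤ ∑ _j ∈ Finset.Ico 1 k, δ := by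
            apply Finset.sum_le_sum
            intro j hj
            rw [Finset.mem_Ico] at hj
            have hδj := hgate j hj.1 hj.2 x hx
            have e : (1 - g j x) - (1 - G j x) = G j x - g j x := by ring
            rw [e, abs_sub_comm]
            exact hδj
        _ = (k - 1 : ℕ) * δ := by rw [Finset.sum_const, Nat.card_Ico]; simp
        _ ≤ k * δ := by
            apply mul_le_mul_of_nonneg_right _ hδpos.le
            exact_mod_cast Nat.sub_le k 1
        _ = ε / 2 := by
            rw [hδdef]
            field_simp
    · have hik' : i + 1 ≤ k := by omega
      simp only [punnH, if_neg hik]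
      set F : (ℕ → EuclideanSpace ℝ (Fin d) → ℝ) → ℕ → ℝ :=
        fun g' j => if j = i then g' j x else 1 - g' j x with hFdef
      have hFprod : ∀ g' : ℕ → EuclideanSpace ℝ (Fin d) → ℝ,
          (∏ j ∈ Finset.Ico 1 (i + 1), F g' j) =
            (∏ j ∈ Finset.Ico 1 i, (1 - g' j x)) * g' i x := by
        intro g'
        rw [Finset.prod_Ico_succ_top hi.1]
        congr 1
        · apply Finset.prod_congr rfl
          intro j hj
          rw [Finset.mem_Ico] at hj
          simp only [hFdef, if_neg (by omega : j ≠ i)]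
        · simp [hFdef]
      rw [← hFprod g, ← hFprod G]
      calc |(∏ j ∈ Finset.Ico 1 (i + 1), F g j) - ∏ j ∈ Finset.Ico 1 (i + 1), F G j|
          ≤ ∑ j ∈ Finset.Ico 1 (i + 1), |F g j - F G j| := by
            apply aux_abs_prod_sub_prod
            · intro j hj
              obtain ⟨h1, h2⟩ := hgmem j x
              simp only [hFdef]
              split <;> constructor <;> linarith
            · intro j hj
              rw [Finset.mem_Ico] at hj
              obtain ⟨h1, h2⟩ := hGmem j hj.1 (by omega) x hx
              simp only [hFdef]
              split <;> constructor <;> linarith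
        _ ≤ ∑ _j ∈ Finset.Ico 1 (i + 1), δ := by
            apply Finset.sum_le_sum
            intro j hj
            rw [Finset.mem_Ico] at hj
            have hδj := hgate j hj.1 (by omega) x hx
            simp only [hFdef]
            split
            · exact hδj
            · have e : (1 - g j x) - (1 - G j x) = G j x - g j x := by ring
              rw [e, abs_sub_comm]
              exact hδj
        _ = (i : ℕ) * δ := by rw [Finset.sum_const, Nat.card_Ico]; simp
        _ ≤ k * δ := by
            apply mul_le_mul_of_nonneg_right _ hδpos.le
            exact_mod_cast hi.2
        _ = ε / 2 := by
            rw [hδdef]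
            field_simp
  exact aux_biSup_lt (by linarith) (by linarith) hpoint
end

section
/- Let K ⊆ ℝ^d be a nonempty compact set, let k ≥ 2, and let p = (p_1, ..., p_k) : K → ℝ^k be continuous with p_i(x) > 0 for all i and ∑_{i=1}^k p_i(x) = 1 for all x ∈ K. Let g : ℝ → ℝ be continuous, strictly monotone, with range exactly the open interval (0,1). Let D be a set of continuous functions from K to ℝ that is dense in the sup norm (for every continuous φ : K → ℝ and every δ > 0 there exists θ ∈ D with sup_{x∈K} |θ(x) − φ(x)| < δ). Then for every ε > 0 there exist θ_1, ..., θ_{k-1} ∈ D such that the PUNN partition functions h_1, ..., h_k built from the gates g_i(x) = g(θ_i(x)) satisfy max_{1≤i≤k} sup_{x∈K} |h_i(x) − p_i(x)| < ε. -/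
/-- Pointwise value is at most the indexed sup over a set, given a bound. -/
lemma punn_pt_le_biSup {α : Type*} {K : Set α} {f : α → ℝ} {M : ℝ}
    (hM : ∀ y ∈ K, f y ≤ M) {x : α} (hx : x ∈ K) :
    f x ≤ ⨆ y ∈ K, f y := by
  have hb : BddAbove (Set.range fun y => ⨆ _ : y ∈ K, f y) := by
    refine ⟨max M 0, ?_⟩
    rintro _ ⟨y, rfl⟩
    by_cases hy : y ∈ K
    · haveI : Nonempty (y ∈ K) := ⟨hy⟩
      show (⨆ _ : y ∈ K, f y) ≤ max M 0
      rw [ciSup_const]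
      exact le_max_of_le_left (hM y hy)
    · haveI : IsEmpty (y ∈ K) := ⟨hy⟩
      show (⨆ _ : y ∈ K, f y) ≤ max M 0
      rw [Real.iSup_of_isEmpty]
      exact le_max_right _ _
  calc f x = ⨆ _ : x ∈ K, f x := by
        haveI : Nonempty (x ∈ K) := ⟨hx⟩; exact ciSup_const.symm
    _ ≤ ⨆ y ∈ K, f y := le_ciSup hb x

/-- Indexed sup over a set is at most a nonnegative pointwise bound. -/
lemma punn_biSup_le {α : Type*} {K : Set α} {f : α → ℝ} {c : ℝ} (hc : 0 ≤ c)
    (h : ∀ x ∈ K, f x ≤ c) : (⨆ x ∈ K, f x) ≤ c :=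
  Real.iSup_le (fun x => Real.iSup_le (fun hx => h x hx) hc) hc

/-- Difference of products of factors bounded by 1. -/
lemma punn_abs_prod_sub_prod_le {s : Finset ℕ} {a b : ℕ → ℝ} {η : ℝ} (hη : 0 ≤ η)
    (ha : ∀ j ∈ s, |a j| ≤ 1) (hb : ∀ j ∈ s, |b j| ≤ 1)
    (hab : ∀ j ∈ s, |a j - b j| ≤ η) :
    |∏ j ∈ s, a j - ∏ j ∈ s, b j| ≤ s.card * η := by
  classical
  induction s using Finset.induction_on with
  | empty => simp
  | @insert j s hj ih =>
    rw [Finset.prod_insert hj, Finset.prod_insert hj, Finset.card_insert_of_notMem hj]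
    have ha' : ∀ i ∈ s, |a i| ≤ 1 := fun i hi => ha i (Finset.mem_insert_of_mem hi)
    have hb' : ∀ i ∈ s, |b i| ≤ 1 := fun i hi => hb i (Finset.mem_insert_of_mem hi)
    have hab' : ∀ i ∈ s, |a i - b i| ≤ η := fun i hi => hab i (Finset.mem_insert_of_mem hi)
    have ihs := ih ha' hb' hab'
    have hja : |a j| ≤ 1 := ha j (Finset.mem_insert_self j s)
    have hpb : |∏ i ∈ s, b i| ≤ 1 := by
      rw [Finset.abs_prod]
      exact Finset.prod_le_one (fun i _ => abs_nonneg _) (fun i hi => hb' i hi)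
    have key : a j * ∏ i ∈ s, a i - b j * ∏ i ∈ s, b i
        = a j * (∏ i ∈ s, a i - ∏ i ∈ s, b i) + (a j - b j) * ∏ i ∈ s, b i := by ring
    calc |a j * ∏ i ∈ s, a i - b j * ∏ i ∈ s, b i|
        ≤ |a j| * |∏ i ∈ s, a i - ∏ i ∈ s, b i| + |a j - b j| * |∏ i ∈ s, b i| := by
          rw [key]
          exact le_trans (abs_add_le _ _) (by rw [abs_mul, abs_mul])
      _ ≤ 1 * (s.card * η) + η * 1 :=
          add_le_add (mul_le_mul hja ihs (abs_nonneg _) zero_le_one)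
            (mul_le_mul (hab j (Finset.mem_insert_self j s)) hpb (abs_nonneg _) hη)
      _ = ((s.card : ℝ) + 1) * η := by ring
      _ = ((s.card + 1 : ℕ) : ℝ) * η := by push_cast; ring

/-- A continuous strictly monotone `g : ℝ → ℝ` with range `(0,1)` has a
right inverse continuous on `(0,1)`. -/
lemma punn_exists_right_inverse {g : ℝ → ℝ}
    (hg_mono : StrictMono g ∨ StrictAnti g)
    (hg_range : Set.range g = Set.Ioo (0 : ℝ) 1) :
    ∃ u : ℝ → ℝ, ContinuousOn u (Set.Ioo 0 1) ∧ ∀ y ∈ Set.Ioo (0 : ℝ) 1, g (u y) = y := by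
  classical
  have core : ∀ (f : ℝ → ℝ), StrictMono f → Set.range f = Set.Ioo (0 : ℝ) 1 →
      ∃ u : ℝ → ℝ, ContinuousOn u (Set.Ioo 0 1) ∧ ∀ y ∈ Set.Ioo (0 : ℝ) 1, f (u y) = y := by
    intro f hf hfr
    haveI : Set.OrdConnected (Set.Ioo (0 : ℝ) 1) := Set.ordConnected_Ioo
    let e : ℝ ≃o (Set.Ioo (0 : ℝ) 1) := (hf.orderIso f).trans (OrderIso.setCongr _ _ hfr)
    have hce : Continuous (e.symm : Set.Ioo (0 : ℝ) 1 → ℝ) := e.symm.continuous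
    refine ⟨fun y => if h : y ∈ Set.Ioo (0 : ℝ) 1 then e.symm ⟨y, h⟩ else 0, ?_, ?_⟩
    · rw [continuousOn_iff_continuous_restrict]
      have heq : (Set.Ioo (0 : ℝ) 1).restrict
          (fun y => if h : y ∈ Set.Ioo (0 : ℝ) 1 then e.symm ⟨y, h⟩ else 0)
          = fun z => e.symm z := by
        funext z
        exact dif_pos z.2
      exact (congrArg Continuous heq).mpr hce
    · intro y hy
      simp only [dif_pos hy]
      have h2 : ((e (e.symm ⟨y, hy⟩) : Set.Ioo (0 : ℝ) 1) : ℝ) = y := by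
        rw [e.apply_symm_apply]
      have h3 : ∀ z : ℝ, ((e z : Set.Ioo (0 : ℝ) 1) : ℝ) = f z := fun z => rfl
      rw [h3] at h2
      exact h2
  rcases hg_mono with hmono | hanti
  · exact core g hmono hg_range
  · have hmono2 : StrictMono (fun x => g (-x)) := by
      intro x y hxy
      exact hanti (neg_lt_neg hxy)
    have hr2 : Set.range (fun x => g (-x)) = Set.Ioo (0 : ℝ) 1 := by
      rw [← hg_range]
      ext y
      constructor
      · rintro ⟨x, rfl⟩; exact ⟨-x, rfl⟩
      · rintro ⟨x, rfl⟩; exact ⟨-x, by simp⟩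
    obtain ⟨u2, hu2c, hu2⟩ := core _ hmono2 hr2
    exact ⟨fun y => -(u2 y), hu2c.neg, fun y hy => hu2 y hy⟩

/-- Density of PUNN with a general strictly monotone continuous activation
`g : ℝ → ℝ` whose range is exactly `(0,1)`: for a nonempty compact `K ⊆ ℝ^d`, a
continuous probability map `p : K → ri(Δ^{k-1})`, and a sup-norm-dense class `D`
of continuous functions on `K`, for every `ε > 0` there exist `θ 1, …, θ (k-1)`
in `D` such that the PUNN partition functions built from the gates
`g_i x = g (θ i x)` are uniformly `ε`-close to `p` on `K`. -/
theorem punn_density_general_gate (d k : ℕ) (hk : 2 ≤ k)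
    (K : Set (EuclideanSpace ℝ (Fin d))) (hK : IsCompact K) (hne : K.Nonempty)
    (p : ℕ → EuclideanSpace ℝ (Fin d) → ℝ)
    (hp_cont : ∀ i ∈ Finset.Icc 1 k, ContinuousOn (p i) K)
    (hp_pos : ∀ i ∈ Finset.Icc 1 k, ∀ x ∈ K, 0 < p i x)
    (hp_sum : ∀ x ∈ K, ∑ i ∈ Finset.Icc 1 k, p i x = 1)
    (g : ℝ → ℝ) (hg_cont : Continuous g)
    (hg_mono : StrictMono g ∨ StrictAnti g)
    (hg_range : Set.range g = Set.Ioo (0 : ℝ) 1)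
    (D : Set (EuclideanSpace ℝ (Fin d) → ℝ))
    (hD_cont : ∀ f ∈ D, ContinuousOn f K)
    (hD_dense : ∀ φ : EuclideanSpace ℝ (Fin d) → ℝ, ContinuousOn φ K →
      ∀ δ > 0, ∃ θ ∈ D, (⨆ x ∈ K, |θ x - φ x|) < δ) :
    ∀ ε > 0, ∃ θ : ℕ → EuclideanSpace ℝ (Fin d) → ℝ,
      (∀ i ∈ Finset.Icc 1 (k - 1), θ i ∈ D) ∧
      ∀ i ∈ Finset.Icc 1 k,
        (⨆ x ∈ K, |punnH k (fun j y => g (θ j y)) i x - p i x|) < ε := by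
  classical
  intro ε hε
  -- tail sums
  set S : ℕ → EuclideanSpace ℝ (Fin d) → ℝ := fun i x => ∑ j ∈ Finset.Icc i k, p j x with hSdef
  have hS_pos : ∀ i, 1 ≤ i → i ≤ k → ∀ x ∈ K, 0 < S i x := by
    intro i h1 h2 x hx
    refine Finset.sum_pos (fun j hj => ?_) ⟨i, Finset.mem_Icc.mpr ⟨le_refl i, h2⟩⟩
    rcases Finset.mem_Icc.mp hj with ⟨hj1, hj2⟩
    exact hp_pos j (Finset.mem_Icc.mpr ⟨le_trans h1 hj1, hj2⟩) x hx
  have hS_rec : ∀ i, i ≤ k → ∀ x, S i x = p i x + S (i + 1) x := by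
    intro i hik x
    simp only [hSdef]
    rw [Finset.Icc_eq_cons_Ioc hik, Finset.sum_cons, Finset.Icc_add_one_left_eq_Ioc]
  have hS_cont : ∀ i, 1 ≤ i → ContinuousOn (S i) K := by
    intro i h1
    apply continuousOn_finset_sum
    intro j hj
    rcases Finset.mem_Icc.mp hj with ⟨hj1, hj2⟩
    exact hp_cont j (Finset.mem_Icc.mpr ⟨le_trans h1 hj1, hj2⟩)
  have hS_one : ∀ x ∈ K, S 1 x = 1 := fun x hx => hp_sum x hx
  -- ideal gates
  set G : ℕ → EuclideanSpace ℝ (Fin d) → ℝ := fun i x => p i x / S i x with hGdef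
  have hG_mem : ∀ i, 1 ≤ i → i + 1 ≤ k → ∀ x ∈ K, G i x ∈ Set.Ioo (0 : ℝ) 1 := by
    intro i h1 h2 x hx
    have hSp := hS_pos i h1 (le_trans (Nat.le_succ i) h2) x hx
    have hpp := hp_pos i (Finset.mem_Icc.mpr ⟨h1, le_trans (Nat.le_succ i) h2⟩) x hx
    constructor
    · exact div_pos hpp hSp
    · rw [div_lt_one hSp, hS_rec i (le_trans (Nat.le_succ i) h2) x]
      have := hS_pos (i + 1) (le_trans h1 (Nat.le_succ i)) h2 x hx
      linarith
  have hG_cont : ∀ i, 1 ≤ i → i ≤ k → ContinuousOn (G i) K := by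
    intro i h1 h2
    exact (hp_cont i (Finset.mem_Icc.mpr ⟨h1, h2⟩)).div (hS_cont i h1)
      (fun x hx => ne_of_gt (hS_pos i h1 h2 x hx))
  -- right inverse of g
  obtain ⟨u, hu_cont, hu_inv⟩ := punn_exists_right_inverse hg_mono hg_range
  -- tolerance
  have hk0 : (0 : ℝ) < k := by exact_mod_cast (by omega : 0 < k)
  set η : ℝ := ε / (2 * k) with hηdef
  have hη : 0 < η := div_pos hε (by linarith)
  -- approximate each ideal gate
  have key : ∀ i ∈ Finset.Icc 1 (k - 1), ∃ t ∈ D, ∀ x ∈ K, |g (t x) - G i x| ≤ η := by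
    intro i hi
    rcases Finset.mem_Icc.mp hi with ⟨h1, h2⟩
    have h2' : i + 1 ≤ k := by omega
    have h2k : i ≤ k := by omega
    set φ : EuclideanSpace ℝ (Fin d) → ℝ := fun x => u (G i x) with hφdef
    have hφ_cont : ContinuousOn φ K :=
      hu_cont.comp (hG_cont i h1 h2k) (fun x hx => hG_mem i h1 h2' x hx)
    have hgφ : ∀ x ∈ K, g (φ x) = G i x := fun x hx => hu_inv _ (hG_mem i h1 h2' x hx)
    obtain ⟨C, hC⟩ := hK.exists_bound_of_continuousOn hφ_cont
    -- uniform continuity of g on a compact interval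
    have hgu : UniformContinuousOn g (Set.Icc (-(C + 1)) (C + 1)) :=
      isCompact_Icc.uniformContinuousOn_of_continuous hg_cont.continuousOn
    rw [Metric.uniformContinuousOn_iff] at hgu
    obtain ⟨δ, hδ, hδ'⟩ := hgu η hη
    set δ2 : ℝ := min δ 1 with hδ2def
    have hδ2 : 0 < δ2 := lt_min hδ one_pos
    obtain ⟨t, htD, htsup⟩ := hD_dense φ hφ_cont δ2 hδ2
    refine ⟨t, htD, ?_⟩
    intro x hx
    -- pointwise bound from the sup
    have ht_cont : ContinuousOn (fun y => |t y - φ y|) K :=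
      ((hD_cont t htD).sub hφ_cont).abs
    obtain ⟨M, hM⟩ := hK.exists_bound_of_continuousOn ht_cont
    have hM' : ∀ y ∈ K, |t y - φ y| ≤ M := by
      intro y hy
      have := hM y hy
      rwa [Real.norm_eq_abs, abs_abs] at this
    have hpt : |t x - φ x| < δ2 :=
      lt_of_le_of_lt (punn_pt_le_biSup hM' hx) htsup
    have hφx : φ x ∈ Set.Icc (-(C + 1)) (C + 1) := by
      have := hC x hx
      rw [Real.norm_eq_abs] at this
      constructor <;> [linarith [abs_le.mp this |>.1]; linarith [abs_le.mp this |>.2]]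
    have htx : t x ∈ Set.Icc (-(C + 1)) (C + 1) := by
      have h1' := hC x hx
      rw [Real.norm_eq_abs] at h1'
      have h2'' : |t x - φ x| ≤ 1 := le_of_lt (lt_of_lt_of_le hpt (min_le_right _ _))
      rcases abs_le.mp h1' with ⟨ha, hb⟩
      rcases abs_le.mp h2'' with ⟨hc', hd⟩
      constructor <;> [linarith; linarith]
    have hdist : dist (t x) (φ x) < δ :=
      lt_of_lt_of_le (by rw [Real.dist_eq]; exact hpt) (min_le_left _ _)
    have := hδ' (t x) htx (φ x) hφx hdist
    rw [Real.dist_eq] at this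
    rw [← hgφ x hx]
    exact le_of_lt this
  choose! θ hθD hθ using key
  refine ⟨θ, hθD, ?_⟩
  -- values of gates in (0,1)
  have ha_mem : ∀ j x, g (θ j x) ∈ Set.Ioo (0 : ℝ) 1 := by
    intro j x
    rw [← hg_range]
    exact Set.mem_range_self _
  -- telescoping identity
  have htel : ∀ x ∈ K, ∀ i, 1 ≤ i → i ≤ k →
      ∏ j ∈ Finset.Ico 1 i, (1 - G j x) = S i x := by
    intro x hx i h1
    induction i, h1 using Nat.le_induction with
    | base =>
      intro _
      simp [hS_one x hx]
    | succ n hn ih =>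
      intro hnk
      have hnk' : n ≤ k := by omega
      have hn1k : n + 1 ≤ k := hnk
      rw [Finset.prod_Ico_succ_top hn, ih hnk']
      have hSp := hS_pos n hn hnk' x hx
      have h1G : 1 - G n x = S (n + 1) x / S n x := by
        rw [hGdef]
        field_simp
        rw [hS_rec n hnk' x]
        ring
      rw [h1G]
      field_simp
  -- exact representation of p
  have hrep_lt : ∀ x ∈ K, ∀ i, 1 ≤ i → i < k →
      p i x = (∏ j ∈ Finset.Ico 1 i, (1 - G j x)) * G i x := by
    intro x hx i h1 h2
    rw [htel x hx i h1 (le_of_lt h2), hGdef]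
    have hSp := hS_pos i h1 (le_of_lt h2) x hx
    field_simp
  have hrep_k : ∀ x ∈ K, p k x = ∏ j ∈ Finset.Ico 1 k, (1 - G j x) := by
    intro x hx
    rw [htel x hx k (by omega) le_rfl, hSdef]
    simp
  -- cast facts
  have hcast : ((k - 1 : ℕ) : ℝ) = (k : ℝ) - 1 := by
    have : (1 : ℕ) ≤ k := by omega
    rw [Nat.cast_sub this, Nat.cast_one]
  have hkR : (0 : ℝ) < (k : ℝ) := by exact_mod_cast (by omega : 0 < k)
  have hkη : (k : ℝ) * η = ε / 2 := by
    rw [hηdef]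
    field_simp
  -- per-point bound
  have hbound : ∀ i ∈ Finset.Icc 1 k, ∀ x ∈ K,
      |punnH k (fun j y => g (θ j y)) i x - p i x| ≤ ε / 2 := by
    intro i hi x hx
    rcases Finset.mem_Icc.mp hi with ⟨h1, h2⟩
    have habs_a : ∀ j, |1 - g (θ j x)| ≤ 1 := by
      intro j
      rcases ha_mem j x with ⟨hj1, hj2⟩
      rw [abs_le]; constructor <;> linarith
    have ha_le : ∀ j, |g (θ j x)| ≤ 1 := by
      intro j
      rcases ha_mem j x with ⟨hj1, hj2⟩
      rw [abs_le]; constructor <;> linarith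
    have habs_b : ∀ j ∈ Finset.Ico 1 k, |1 - G j x| ≤ 1 := by
      intro j hj
      rcases Finset.mem_Ico.mp hj with ⟨hj1, hj2⟩
      rcases hG_mem j hj1 (by omega) x hx with ⟨hb1, hb2⟩
      rw [abs_le]; constructor <;> linarith
    have hgate : ∀ j ∈ Finset.Ico 1 k, |g (θ j x) - G j x| ≤ η := by
      intro j hj
      rcases Finset.mem_Ico.mp hj with ⟨hj1, hj2⟩
      exact hθ j (Finset.mem_Icc.mpr ⟨hj1, by omega⟩) x hx
    by_cases hik : i = k
    · rw [punnH, if_pos hik, hik, hrep_k x hx]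
      have := punn_abs_prod_sub_prod_le (le_of_lt hη)
        (fun j hj => habs_a j) habs_b
        (fun j hj => by
          have := hgate j hj
          rw [show (1 - g (θ j x)) - (1 - G j x) = -(g (θ j x) - G j x) by ring, abs_neg]
          exact this)
      refine le_trans this ?_
      rw [Nat.card_Ico]
      calc ((k - 1 : ℕ) : ℝ) * η ≤ (k : ℝ) * η := by
            apply mul_le_mul_of_nonneg_right _ (le_of_lt hη)
            rw [hcast]; linarith
        _ = ε / 2 := hkη
    · have h2' : i < k := lt_of_le_of_ne h2 hik
      rw [punnH, if_neg hik, hrep_lt x hx i h1 h2']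
      set Pa := ∏ j ∈ Finset.Ico 1 i, (1 - g (θ j x)) with hPa
      set Pb := ∏ j ∈ Finset.Ico 1 i, (1 - G j x) with hPb
      have hPa_le : |Pa| ≤ 1 := by
        rw [hPa, Finset.abs_prod]
        exact Finset.prod_le_one (fun j _ => abs_nonneg _) (fun j _ => habs_a j)
      have hsub : ∀ j ∈ Finset.Ico 1 i, j ∈ Finset.Ico 1 k := by
        intro j hj
        rcases Finset.mem_Ico.mp hj with ⟨hj1, hj2⟩
        exact Finset.mem_Ico.mpr ⟨hj1, by omega⟩
      have hPP : |Pa - Pb| ≤ (Finset.Ico 1 i).card * η := by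
        apply punn_abs_prod_sub_prod_le (le_of_lt hη)
          (fun j hj => habs_a j) (fun j hj => habs_b j (hsub j hj))
          (fun j hj => by
            have := hgate j (hsub j hj)
            rw [show (1 - g (θ j x)) - (1 - G j x) = -(g (θ j x) - G j x) by ring, abs_neg]
            exact this)
      have hGi_le : |G i x| ≤ 1 := by
        rcases hG_mem i h1 (by omega) x hx with ⟨hb1, hb2⟩
        rw [abs_le]; constructor <;> linarith
      have hgi : |g (θ i x) - G i x| ≤ η :=
        hθ i (Finset.mem_Icc.mpr ⟨h1, by omega⟩) x hx
      have hkey : Pa * g (θ i x) - Pb * G i x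
          = Pa * (g (θ i x) - G i x) + (Pa - Pb) * G i x := by ring
      have hcard : ((Finset.Ico 1 i).card : ℝ) ≤ (k : ℝ) - 1 := by
        rw [Nat.card_Ico]
        have : ((i - 1 : ℕ) : ℝ) ≤ ((k - 1 : ℕ) : ℝ) := by
          exact_mod_cast (by omega : i - 1 ≤ k - 1)
        rw [hcast] at this
        exact this
      calc |Pa * g (θ i x) - Pb * G i x|
          ≤ |Pa| * |g (θ i x) - G i x| + |Pa - Pb| * |G i x| := by
            rw [hkey]
            exact le_trans (abs_add_le _ _) (by rw [abs_mul, abs_mul])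
        _ ≤ 1 * η + (((k : ℝ) - 1) * η) * 1 := by
            have hk2 : (2 : ℝ) ≤ (k : ℝ) := by exact_mod_cast hk
            exact add_le_add (mul_le_mul hPa_le hgi (abs_nonneg _) zero_le_one)
              (mul_le_mul (le_trans hPP (mul_le_mul_of_nonneg_right hcard (le_of_lt hη)))
                hGi_le (abs_nonneg _) (by nlinarith))
        _ = (k : ℝ) * η := by ring
        _ = ε / 2 := hkη
  intro i hi
  have hle : (⨆ x ∈ K, |punnH k (fun j y => g (θ j y)) i x - p i x|) ≤ ε / 2 :=
    punn_biSup_le (by linarith) (hbound i hi)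
  linarith
end
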